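/- arXiv:2411.00695 — 2 statements merged into one kernel-verified Lean document; each statement's English description precedes it below -/
import Mathlib

section
/- Let R be a commutative ring, p,q ∈ R, and n,m ≥ 2 integers. In the algebra H = R⟨T_a,T_b | T_aⁿ = T_bᵐ, T_aT_b = T_bT_a = p(T_a+T_b)+q⟩, for all 1 ≤ k ≤ m one has T_a·T_bᵏ = p^{k−1}q + pᵏT_a + Σ_{i=1}^{k−1}(p²+q)p^{k−i−1}T_bⁱ + pT_bᵏ. -/
/-- The defining relations of `H = R⟨T_a,T_b | T_aⁿ = T_bᵐ, T_aT_b = T_bT_a = p(T_a+T_b)+q⟩`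
on the free associative `R`-algebra on two generators. -/
inductive TorusHeckeRel (R : Type*) [CommRing R] (p q : R) (n m : ℕ) :
    FreeAlgebra R (Fin 2) → FreeAlgebra R (Fin 2) → Prop
  | pow : TorusHeckeRel R p q n m (FreeAlgebra.ι R 0 ^ n) (FreeAlgebra.ι R 1 ^ m)
  | ab : TorusHeckeRel R p q n m (FreeAlgebra.ι R 0 * FreeAlgebra.ι R 1)
      (p • (FreeAlgebra.ι R 0 + FreeAlgebra.ι R 1) + algebraMap R _ q)
  | ba : TorusHeckeRel R p q n m (FreeAlgebra.ι R 1 * FreeAlgebra.ι R 0)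
      (p • (FreeAlgebra.ι R 0 + FreeAlgebra.ι R 1) + algebraMap R _ q)

/-- The algebra `H_{n,m}(p,q) = R⟨T_a,T_b | T_aⁿ = T_bᵐ, T_aT_b = T_bT_a = p(T_a+T_b)+q⟩`. -/
def TorusHecke (R : Type*) [CommRing R] (p q : R) (n m : ℕ) : Type _ :=
  RingQuot (TorusHeckeRel R p q n m)

noncomputable instance (R : Type*) [CommRing R] (p q : R) (n m : ℕ) :
    Ring (TorusHecke R p q n m) := by unfold TorusHecke; infer_instance

noncomputable instance (R : Type*) [CommRing R] (p q : R) (n m : ℕ) :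
    Algebra R (TorusHecke R p q n m) := by unfold TorusHecke; infer_instance

/-- The generator `T_a` of `H_{n,m}(p,q)`. -/
noncomputable def Ta (R : Type*) [CommRing R] (p q : R) (n m : ℕ) : TorusHecke R p q n m :=
  RingQuot.mkAlgHom R (TorusHeckeRel R p q n m) (FreeAlgebra.ι R 0)

/-- The generator `T_b` of `H_{n,m}(p,q)`. -/
noncomputable def Tb (R : Type*) [CommRing R] (p q : R) (n m : ℕ) : TorusHecke R p q n m :=
  RingQuot.mkAlgHom R (TorusHeckeRel R p q n m) (FreeAlgebra.ι R 1)

lemma torusHecke_ab (R : Type*) [CommRing R] (p q : R) (n m : ℕ) :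
    Ta R p q n m * Tb R p q n m =
      p • Ta R p q n m + p • Tb R p q n m + algebraMap R _ q := by
  have h := RingQuot.mkAlgHom_rel R (TorusHeckeRel.ab (R := R) (p := p) (q := q) (n := n) (m := m))
  simp [Ta, Tb, map_mul, map_add, map_smul, smul_add, AlgHom.commutes] at h
  exact h

lemma torusHecke_aux (R : Type*) [CommRing R] (p q : R) (n m : ℕ) (k : ℕ) :
    Ta R p q n m * Tb R p q n m ^ (k + 1) =
      algebraMap R _ (p ^ k * q) + p ^ (k + 1) • Ta R p q n m +
        (∑ i ∈ Finset.range k, ((p ^ 2 + q) * p ^ (k - i - 1)) • Tb R p q n m ^ (i + 1)) +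
        p • Tb R p q n m ^ (k + 1) := by
  induction k with
  | zero =>
    simp only [zero_add, pow_one, pow_zero, one_mul, Finset.range_zero, Finset.sum_empty,
      add_zero, torusHecke_ab]
    abel
  | succ k ih =>
    have step : Ta R p q n m * Tb R p q n m ^ (k + 1 + 1) =
        (Ta R p q n m * Tb R p q n m ^ (k + 1)) * Tb R p q n m := by
      rw [pow_succ, mul_assoc]
    rw [step, ih, add_mul, add_mul, add_mul]
    erw [Finset.sum_mul]
    have h1 : algebraMap R (TorusHecke R p q n m) (p ^ k * q) * Tb R p q n m =
        (p ^ k * q) • Tb R p q n m := (Algebra.smul_def _ _).symm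
    have h2 : (p ^ (k + 1) • Ta R p q n m) * Tb R p q n m =
        p ^ (k + 1 + 1) • Ta R p q n m + p ^ (k + 1 + 1) • Tb R p q n m +
          algebraMap R _ (p ^ (k + 1) * q) := by
      rw [smul_mul_assoc, torusHecke_ab, smul_add, smul_add, smul_smul, smul_smul,
        ← pow_succ,
        Algebra.smul_def (p ^ (k + 1)) (algebraMap R (TorusHecke R p q n m) q), ← map_mul]
    have h3 : ∀ i ∈ Finset.range k,
        (((p ^ 2 + q) * p ^ (k - i - 1)) • Tb R p q n m ^ (i + 1)) * Tb R p q n m =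
          ((p ^ 2 + q) * p ^ (k - i - 1)) • Tb R p q n m ^ (i + 1 + 1) := by
      intro i _
      rw [smul_mul_assoc, ← pow_succ]
    rw [h1, h2]
    erw [Finset.sum_congr rfl h3]
    rw [smul_mul_assoc, ← pow_succ]
    have hsum : ∑ i ∈ Finset.range (k + 1),
        ((p ^ 2 + q) * p ^ (k + 1 - i - 1)) • Tb R p q n m ^ (i + 1) =
        (∑ i ∈ Finset.range k,
          ((p ^ 2 + q) * p ^ (k - i - 1)) • Tb R p q n m ^ (i + 1 + 1)) +
        ((p ^ 2 + q) * p ^ k) • Tb R p q n m := by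
      rw [Finset.sum_range_succ']
      congr 1
      · apply Finset.sum_congr rfl
        intro i _
        congr 3
        omega
      · simp
    rw [hsum]
    have hco : (p ^ k * q) • Tb R p q n m + p ^ (k + 1 + 1) • Tb R p q n m =
        ((p ^ 2 + q) * p ^ k) • Tb R p q n m := by
      rw [← add_smul]
      congr 1
      ring
    calc (p ^ k * q) • Tb R p q n m +
          (p ^ (k + 1 + 1) • Ta R p q n m + p ^ (k + 1 + 1) • Tb R p q n m +
            algebraMap R (TorusHecke R p q n m) (p ^ (k + 1) * q)) +
          (∑ i ∈ Finset.range k,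
            ((p ^ 2 + q) * p ^ (k - i - 1)) • Tb R p q n m ^ (i + 1 + 1)) +
          p • Tb R p q n m ^ (k + 1 + 1)
        = algebraMap R (TorusHecke R p q n m) (p ^ (k + 1) * q) + p ^ (k + 1 + 1) • Ta R p q n m +
          ((∑ i ∈ Finset.range k,
            ((p ^ 2 + q) * p ^ (k - i - 1)) • Tb R p q n m ^ (i + 1 + 1)) +
            ((p ^ k * q) • Tb R p q n m + p ^ (k + 1 + 1) • Tb R p q n m)) +
          p • Tb R p q n m ^ (k + 1 + 1) := by abel
      _ = _ := by rw [hco]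

/-- In `H_{n,m}(p,q)`, for `1 ≤ k ≤ m`:
`T_a·T_bᵏ = p^{k−1}q + pᵏT_a + Σ_{i=1}^{k−1}(p²+q)p^{k−i−1}T_bⁱ + pT_bᵏ`. -/
theorem stmt_12 (R : Type*) [CommRing R] (p q : R) (n m : ℕ) (hn : 2 ≤ n) (hm : 2 ≤ m)
    (k : ℕ) (hk1 : 1 ≤ k) (hkm : k ≤ m) :
    Ta R p q n m * Tb R p q n m ^ k =
      algebraMap R _ (p ^ (k - 1) * q) + p ^ k • Ta R p q n m +
        (∑ i ∈ Finset.Icc 1 (k - 1), ((p ^ 2 + q) * p ^ (k - i - 1)) • Tb R p q n m ^ i) +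
        p • Tb R p q n m ^ k := by
  obtain ⟨j, rfl⟩ : ∃ j, k = j + 1 := ⟨k - 1, by omega⟩
  rw [torusHecke_aux]
  congr 2
  rw [Nat.add_sub_cancel, ← Finset.Ico_add_one_right_eq_Icc, Finset.sum_Ico_eq_sum_range]
  apply Finset.sum_congr (by rw [Nat.add_sub_cancel])
  intro i _
  rw [show j + 1 - (1 + i) - 1 = j - i - 1 by omega, show 1 + i = i + 1 by omega]
end

section
/- Let R be a commutative ring, p,q ∈ R, and n,m ≥ 2. The algebra H_{n,m}(p,q) = R⟨T_a,T_b | T_aⁿ = T_bᵐ, T_aT_b = T_bT_a = p(T_a+T_b)+q⟩ is a free R-module of rank n+m, with basis {1, T_a, T_a², …, T_aⁿ = T_bᵐ, T_b^{m−1}, …, T_b}. -/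
namespace THAux

variable (R : Type*) [CommRing R] (p q : R) (n m : ℕ) [NeZero (n + m)]

/-- index in `Fin (n+m)` -/
def idx (j : ℕ) : Fin (n + m) := ⟨j % (n + m), Nat.mod_lt _ (Nat.pos_of_ne_zero (NeZero.ne _))⟩

/-- `j`-th standard basis vector (indices mod `n+m`). -/
noncomputable def ee (j : ℕ) : Fin (n + m) → R := Pi.basisFun R (Fin (n + m)) (idx n m j)

lemma ee_basis (i : Fin (n + m)) : ee R n m (i : ℕ) = Pi.basisFun R (Fin (n + m)) i := by
  unfold ee idx
  congr 1
  exact Fin.ext (Nat.mod_eq_of_lt i.isLt)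

lemma ee_wrap : ee R n m (n + m) = ee R n m 0 := by
  unfold ee idx
  congr 1
  exact Fin.ext (by simp)

end THAux
namespace THAux

variable (R : Type*) [CommRing R] (p q : R) (n m : ℕ) [NeZero (n + m)]

/-- normal form of `x * y^k` -/
noncomputable def Xv : ℕ → (Fin (n + m) → R)
  | 0 => ee R n m 1
  | (k+1) => p • Xv k + p • ee R n m (n + m - (k+1)) + q • ee R n m (n + m - k)

/-- normal form of `y * x^k` -/
noncomputable def Wv : ℕ → (Fin (n + m) → R)
  | 0 => ee R n m (n + m - 1)
  | (k+1) => p • Wv k + p • ee R n m (k+1) + q • ee R n m k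

/-- multiplication by `x` -/
noncomputable def Aop : (Fin (n + m) → R) →ₗ[R] (Fin (n + m) → R) :=
  (Pi.basisFun R (Fin (n + m))).constr R fun i =>
    if (i : ℕ) < n then ee R n m ((i : ℕ) + 1) else Xv R p q n m (n + m - (i : ℕ))

/-- multiplication by `y` -/
noncomputable def Bop : (Fin (n + m) → R) →ₗ[R] (Fin (n + m) → R) :=
  (Pi.basisFun R (Fin (n + m))).constr R fun i =>
    if (i : ℕ) = 0 then ee R n m (n + m - 1)
    else if (i : ℕ) ≤ n then Wv R p q n m (i : ℕ) else ee R n m ((i : ℕ) - 1)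

variable {R p q n m}

lemma idx_val (j : ℕ) (hj : j < n + m) : ((idx n m j : Fin (n+m)) : ℕ) = j :=
  Nat.mod_eq_of_lt hj

lemma Aop_apply (j : ℕ) (hj : j < n + m) :
    Aop R p q n m (ee R n m j) =
      if j < n then ee R n m (j + 1) else Xv R p q n m (n + m - j) := by
  rw [ee, Aop, Module.Basis.constr_basis, idx_val j hj]

lemma Bop_apply (j : ℕ) (hj : j < n + m) :
    Bop R p q n m (ee R n m j) =
      if j = 0 then ee R n m (n + m - 1)
      else if j ≤ n then Wv R p q n m j else ee R n m (j - 1) := by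
  rw [ee, Bop, Module.Basis.constr_basis, idx_val j hj]

lemma Aop_lt (j : ℕ) (hj : j < n) (hm : 0 < m) :
    Aop R p q n m (ee R n m j) = ee R n m (j + 1) := by
  rw [Aop_apply j (by omega), if_pos hj]

lemma Aop_ge (j : ℕ) (h1 : n ≤ j) (h2 : j < n + m) :
    Aop R p q n m (ee R n m j) = Xv R p q n m (n + m - j) := by
  rw [Aop_apply j h2, if_neg (by omega)]

lemma Bop_zero (hm : 0 < n + m) : Bop R p q n m (ee R n m 0) = ee R n m (n + m - 1) := by
  rw [Bop_apply 0 hm, if_pos rfl]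

lemma Bop_mid (j : ℕ) (h1 : 1 ≤ j) (h2 : j ≤ n) (hm : 0 < m) :
    Bop R p q n m (ee R n m j) = Wv R p q n m j := by
  rw [Bop_apply j (by omega), if_neg (by omega), if_pos h2]

lemma Bop_gt (j : ℕ) (h1 : n < j) (h2 : j < n + m) :
    Bop R p q n m (ee R n m j) = ee R n m (j - 1) := by
  rw [Bop_apply j h2, if_neg (by omega), if_neg (by omega)]

/-- `B` sends `y^k` to `y^(k+1)`, for `k < m`. -/
lemma Bop_y (k : ℕ) (hk : k < m) :
    Bop R p q n m (ee R n m (n + m - k)) = ee R n m (n + m - (k + 1)) := by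
  rcases Nat.eq_zero_or_pos k with rfl | hk1
  · rw [Nat.sub_zero, ee_wrap, Bop_zero (by omega)]
  · rw [Bop_gt (n + m - k) (by omega) (by omega), Nat.sub_sub]

end THAux
namespace THAux

variable {R : Type*} [CommRing R] {p q : R} {n m : ℕ} [NeZero (n + m)]

lemma Wv_zero : Wv R p q n m 0 = ee R n m (n + m - 1) := rfl
lemma Wv_succ (k : ℕ) : Wv R p q n m (k+1) =
    p • Wv R p q n m k + p • ee R n m (k+1) + q • ee R n m k := rfl
lemma Xv_zero : Xv R p q n m 0 = ee R n m 1 := rfl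
lemma Xv_succ (k : ℕ) : Xv R p q n m (k+1) =
    p • Xv R p q n m k + p • ee R n m (n + m - (k+1)) + q • ee R n m (n + m - k) := rfl

/-- key lemma: `x · (y x^k) = p x^(k+1) + p (y x^k) + q x^k` for `k < n`. -/
lemma Aop_Wv (hm : 0 < m) : ∀ k, k < n →
    Aop R p q n m (Wv R p q n m k) =
      p • ee R n m (k + 1) + p • Wv R p q n m k + q • ee R n m k := by
  intro k
  induction k with
  | zero =>
    intro hk
    rw [Wv_zero, Aop_ge (n + m - 1) (by omega) (by omega)]
    have h1 : n + m - (n + m - 1) = 1 := by omega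
    rw [h1, Xv_succ, Xv_zero]
    have h2 : n + m - 0 = n + m := rfl
    rw [h2, ee_wrap]
  | succ k ih =>
    intro hk
    have ihk := ih (by omega)
    rw [Wv_succ, map_add, map_add, map_smul, map_smul, map_smul, ihk,
      Aop_lt (k+1) hk hm, Aop_lt k (by omega) hm]
    module

/-- `x · (y x^n) = p (x y^m) + p (y x^n) + q x^n`. -/
lemma Aop_Wn (hn : 1 ≤ n) (hm : 1 ≤ m) :
    Aop R p q n m (Wv R p q n m n) =
      p • Xv R p q n m m + p • Wv R p q n m n + q • ee R n m n := by
  obtain ⟨k, rfl⟩ : ∃ k, n = k + 1 := ⟨n - 1, by omega⟩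
  rw [Wv_succ, map_add, map_add, map_smul, map_smul, map_smul,
    Aop_Wv hm k (by omega), Aop_lt k (by omega) hm,
    Aop_ge (k+1) le_rfl (by omega)]
  have h1 : k + 1 + m - (k + 1) = m := by omega
  rw [h1]
  module

/-- key lemma: `y · (x y^k) = p y^(k+1) + p (x y^k) + q y^k` for `k < m`. -/
lemma Bop_Xv (hn : 2 ≤ n) : ∀ k, k < m →
    Bop R p q n m (Xv R p q n m k) =
      p • ee R n m (n + m - (k + 1)) + p • Xv R p q n m k + q • ee R n m (n + m - k) := by
  intro k
  induction k with
  | zero =>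
    intro hk
    rw [Xv_zero, Bop_mid 1 le_rfl (by omega) (by omega), Wv_succ, Wv_zero,
      Nat.sub_zero, ee_wrap]
  | succ k ih =>
    intro hk
    have ihk := ih (by omega)
    rw [Xv_succ, map_add, map_add, map_smul, map_smul, map_smul, ihk,
      Bop_y (k+1) hk, Bop_y k (by omega)]
    module

/-- `y · (x y^m) = p (y x^n) + p (x y^m) + q y^m`. -/
lemma Bop_Xm (hn : 2 ≤ n) (hm : 2 ≤ m) :
    Bop R p q n m (Xv R p q n m m) =
      p • Wv R p q n m n + p • Xv R p q n m m + q • ee R n m n := by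
  obtain ⟨k, rfl⟩ : ∃ k, m = k + 1 := ⟨m - 1, by omega⟩
  rw [Xv_succ, map_add, map_add, map_smul, map_smul, map_smul,
    Bop_Xv hn k (by omega)]
  have h1 : n + (k + 1) - (k + 1) = n := by omega
  have h2 : n + (k + 1) - k = n + 1 := by omega
  rw [h1, h2, Bop_mid n (by omega) le_rfl (by omega),
    Bop_gt (n+1) (by omega) (by omega), Nat.add_sub_cancel]
  module

end THAux
namespace THAux

variable {R : Type*} [CommRing R] {p q : R} {n m : ℕ} [NeZero (n + m)]

/-- The right-hand side endomorphism `p·A + p·B + q·1`. -/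
noncomputable def Cop (R : Type*) [CommRing R] (p q : R) (n m : ℕ) [NeZero (n + m)] :
    Module.End R (Fin (n + m) → R) :=
  p • Aop R p q n m + p • Bop R p q n m + q • 1

lemma Cop_apply (v : Fin (n + m) → R) :
    Cop R p q n m v = p • Aop R p q n m v + p • Bop R p q n m v + q • v := rfl

lemma hAB (hn : 2 ≤ n) (hm : 2 ≤ m) :
    (Aop R p q n m : Module.End R (Fin (n + m) → R)) * Bop R p q n m = Cop R p q n m := by
  apply LinearMap.ext_on_range (Pi.basisFun R (Fin (n + m))).span_eq
  intro i
  rw [← ee_basis]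
  rcases Nat.lt_or_ge (i : ℕ) n with hlt | hge
  · rcases Nat.eq_zero_or_pos (i : ℕ) with h0 | h1
    · -- j = 0
      rw [h0, Module.End.mul_apply, Cop_apply, Bop_zero (by omega),
        Aop_ge (n + m - 1) (by omega) (by omega), Aop_lt 0 (by omega) (by omega)]
      have h1 : n + m - (n + m - 1) = 1 := by omega
      rw [h1, Xv_succ, Xv_zero, Nat.sub_zero, ee_wrap]
    · -- 1 ≤ j < n
      rw [Module.End.mul_apply, Cop_apply, Bop_mid _ h1 (by omega) (by omega),
        Aop_Wv (by omega) _ hlt, Aop_lt _ hlt (by omega)]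
  · rcases Nat.eq_or_lt_of_le hge with heq | hgt
    · -- j = n
      rw [Module.End.mul_apply, Cop_apply, ← heq, Bop_mid _ (by omega) le_rfl (by omega),
        Aop_Wn (by omega) (by omega), Aop_ge _ le_rfl (by omega), Nat.add_sub_cancel_left]
    · -- n < j
      have hj : (i : ℕ) < n + m := i.isLt
      rw [Module.End.mul_apply, Cop_apply, Bop_gt _ hgt hj,
        Aop_ge _ (by omega) (by omega), Aop_ge _ (by omega) hj]
      have h1 : n + m - ((i : ℕ) - 1) = (n + m - (i : ℕ)) + 1 := by omega
      rw [h1, Xv_succ]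
      have h2 : n + m - (n + m - (i:ℕ) + 1) = (i:ℕ) - 1 := by omega
      have h3 : n + m - (n + m - (i:ℕ)) = (i:ℕ) := by omega
      rw [h2, h3]

lemma hBA (hn : 2 ≤ n) (hm : 2 ≤ m) :
    (Bop R p q n m : Module.End R (Fin (n + m) → R)) * Aop R p q n m = Cop R p q n m := by
  apply LinearMap.ext_on_range (Pi.basisFun R (Fin (n + m))).span_eq
  intro i
  rw [← ee_basis]
  rcases Nat.lt_or_ge (i : ℕ) n with hlt | hge
  · rcases Nat.eq_zero_or_pos (i : ℕ) with h0 | h1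
    · -- j = 0
      rw [h0, Module.End.mul_apply, Cop_apply, Aop_lt 0 (by omega) (by omega),
        Bop_mid 1 le_rfl (by omega) (by omega), Bop_zero (by omega), Wv_succ, Wv_zero]
      module
    · -- 1 ≤ j < n
      rw [Module.End.mul_apply, Cop_apply, Aop_lt _ hlt (by omega),
        Bop_mid _ (by omega) (by omega) (by omega), Bop_mid _ h1 (by omega) (by omega),
        Wv_succ]
      module
  · rcases Nat.eq_or_lt_of_le hge with heq | hgt
    · -- j = n
      rw [Module.End.mul_apply, Cop_apply, ← heq, Aop_ge _ le_rfl (by omega),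
        Nat.add_sub_cancel_left, Bop_Xm hn hm, Bop_mid _ (by omega) le_rfl (by omega)]
      module
    · -- n < j
      have hj : (i : ℕ) < n + m := i.isLt
      rw [Module.End.mul_apply, Cop_apply, Aop_ge _ (by omega) hj,
        Bop_Xv hn _ (by omega), Bop_gt _ hgt hj]
      have h2 : n + m - (n + m - (i:ℕ) + 1) = (i:ℕ) - 1 := by omega
      have h3 : n + m - (n + m - (i:ℕ)) = (i:ℕ) := by omega
      rw [h2, h3]
      module

lemma hcomm (hn : 2 ≤ n) (hm : 2 ≤ m) :
    Commute (Aop R p q n m : Module.End R (Fin (n + m) → R)) (Bop R p q n m) := by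
  unfold Commute SemiconjBy
  rw [hAB hn hm, hBA hn hm]

lemma Apow_e0 (k : ℕ) (hk : k ≤ n) (hm : 0 < m) :
    ((Aop R p q n m : Module.End R (Fin (n + m) → R)) ^ k) (ee R n m 0) = ee R n m k := by
  induction k with
  | zero => simp
  | succ k ih =>
    rw [pow_succ', Module.End.mul_apply, ih (by omega), Aop_lt k (by omega) hm]

lemma Bpow_e0 (k : ℕ) (hk : k ≤ m) :
    ((Bop R p q n m : Module.End R (Fin (n + m) → R)) ^ k) (ee R n m 0) = ee R n m (n + m - k) := by
  induction k with
  | zero => rw [pow_zero, Module.End.one_apply, Nat.sub_zero, ee_wrap]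
  | succ k ih =>
    rw [pow_succ', Module.End.mul_apply, ih (by omega), Bop_y k (by omega)]

lemma hpow (hn : 2 ≤ n) (hm : 2 ≤ m) :
    (Aop R p q n m : Module.End R (Fin (n + m) → R)) ^ n = Bop R p q n m ^ m := by
  apply LinearMap.ext_on_range (Pi.basisFun R (Fin (n + m))).span_eq
  intro i
  rw [← ee_basis]
  have hAe : ((Aop R p q n m : Module.End R (Fin (n+m) → R)) ^ n) (ee R n m 0) = ee R n m n :=
    Apow_e0 n le_rfl (by omega)
  have hBe : ((Bop R p q n m : Module.End R (Fin (n+m) → R)) ^ m) (ee R n m 0) = ee R n m n := by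
    rw [Bpow_e0 m le_rfl, Nat.add_sub_cancel]
  rcases le_or_gt (i : ℕ) n with hle | hgt
  · rw [← Apow_e0 (i : ℕ) hle (by omega), ← Module.End.mul_apply, ← Module.End.mul_apply,
      ← pow_add, Nat.add_comm n (i : ℕ), pow_add, Module.End.mul_apply, hAe,
      ((hcomm hn hm).symm.pow_pow m (i : ℕ)), Module.End.mul_apply, hBe]
  · have hk : n + m - (i : ℕ) ≤ m := by omega
    have hbk : ((Bop R p q n m : Module.End R (Fin (n+m) → R)) ^ (n + m - (i : ℕ)))
        (ee R n m 0) = ee R n m (i : ℕ) := by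
      rw [Bpow_e0 _ hk]
      have hj : (i : ℕ) < n + m := i.isLt
      have h4 : n + m - (n + m - (i : ℕ)) = (i : ℕ) := by omega
      rw [h4]
    rw [← hbk, ← Module.End.mul_apply, ← Module.End.mul_apply,
      ((hcomm hn hm).pow_pow n (n + m - (i : ℕ))), Module.End.mul_apply, hAe,
      ← pow_add, Nat.add_comm m _, pow_add, Module.End.mul_apply, hBe]

end THAux
namespace THAux

variable {R : Type*} [CommRing R] (p q : R) (n m : ℕ) [NeZero (n + m)]

/-- Representation of the free algebra on `R^(n+m)`. -/
noncomputable def rho : FreeAlgebra R (Fin 2) →ₐ[R] Module.End R (Fin (n + m) → R) :=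
  FreeAlgebra.lift R ![Aop R p q n m, Bop R p q n m]

lemma rho_rel (hn : 2 ≤ n) (hm : 2 ≤ m) :
    ∀ ⦃x y : FreeAlgebra R (Fin 2)⦄, TorusHeckeRel R p q n m x y →
      rho p q n m x = rho p q n m y := by
  rintro x y (⟨⟩|⟨⟩|⟨⟩) <;>
    simp only [rho, map_pow, map_mul, map_add, map_smul, AlgHom.commutes,
      FreeAlgebra.lift_ι_apply, Matrix.cons_val_zero, Matrix.cons_val_one, Matrix.head_cons]
  · exact hpow hn hm
  · rw [hAB hn hm, Cop, Algebra.algebraMap_eq_smul_one, smul_add]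
  · rw [hBA hn hm, Cop, Algebra.algebraMap_eq_smul_one, smul_add]

/-- The induced representation of `TorusHecke`. -/
noncomputable def rhobar (hn : 2 ≤ n) (hm : 2 ≤ m) :
    TorusHecke R p q n m →ₐ[R] Module.End R (Fin (n + m) → R) :=
  RingQuot.liftAlgHom R ⟨rho p q n m, rho_rel p q n m hn hm⟩

lemma rhobar_Ta (hn : 2 ≤ n) (hm : 2 ≤ m) :
    rhobar p q n m hn hm (Ta R p q n m) = Aop R p q n m := by
  rw [Ta, rhobar]
  erw [RingQuot.liftAlgHom_mkAlgHom_apply]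
  rw [rho, FreeAlgebra.lift_ι_apply, Matrix.cons_val_zero]

lemma rhobar_Tb (hn : 2 ≤ n) (hm : 2 ≤ m) :
    rhobar p q n m hn hm (Tb R p q n m) = Bop R p q n m := by
  rw [Tb, rhobar]
  erw [RingQuot.liftAlgHom_mkAlgHom_apply]
  rw [rho, FreeAlgebra.lift_ι_apply, Matrix.cons_val_one, Matrix.cons_val_zero]

end THAux
namespace THAux

variable {R : Type*} [CommRing R] (p q : R) (n m : ℕ) [NeZero (n + m)]

/-- Evaluation at `e₀` of the representation. -/
noncomputable def phi (hn : 2 ≤ n) (hm : 2 ≤ m) : TorusHecke R p q n m →ₗ[R] (Fin (n + m) → R) :=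
  (LinearMap.applyₗ (ee R n m 0)).comp (rhobar p q n m hn hm).toLinearMap

/-- The claimed basis family. -/
noncomputable def fam : Fin (n + m) → TorusHecke R p q n m := fun i =>
  if (i : ℕ) ≤ n then Ta R p q n m ^ (i : ℕ) else Tb R p q n m ^ (n + m - (i : ℕ))

lemma phi_fam (hn : 2 ≤ n) (hm : 2 ≤ m) (i : Fin (n + m)) :
    phi p q n m hn hm (fam p q n m i) = Pi.basisFun R (Fin (n + m)) i := by
  rw [← ee_basis, fam]
  by_cases h : (i : ℕ) ≤ n
  · rw [if_pos h]
    show rhobar p q n m hn hm (Ta R p q n m ^ (i:ℕ)) (ee R n m 0) = _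
    rw [map_pow, rhobar_Ta, Apow_e0 _ h (by omega)]
  · rw [if_neg h]
    have hi := i.isLt
    show rhobar p q n m hn hm (Tb R p q n m ^ (n + m - (i:ℕ))) (ee R n m 0) = _
    have h4 : n + m - (n + m - (i : ℕ)) = (i : ℕ) := by omega
    rw [map_pow, rhobar_Tb, Bpow_e0 _ (by omega), h4]

lemma fam_indep (hn : 2 ≤ n) (hm : 2 ≤ m) : LinearIndependent R (fam p q n m) := by
  apply LinearIndependent.of_comp (phi p q n m hn hm)
  have : ⇑(phi p q n m hn hm) ∘ fam p q n m = ⇑(Pi.basisFun R (Fin (n + m))) :=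
    funext fun i => phi_fam p q n m hn hm i
  rw [this]
  exact (Pi.basisFun R (Fin (n + m))).linearIndependent

-- relations in the quotient
set_option linter.unusedSectionVars false
lemma rel_pow : Ta R p q n m ^ n = Tb R p q n m ^ m := by
  have := RingQuot.mkAlgHom_rel R (TorusHeckeRel.pow (R := R) (p := p) (q := q) (n := n) (m := m))
  rwa [map_pow, map_pow] at this

lemma rel_ab : Ta R p q n m * Tb R p q n m =
    p • (Ta R p q n m + Tb R p q n m) + algebraMap R _ q := by
  have := RingQuot.mkAlgHom_rel R (TorusHeckeRel.ab (R := R) (p := p) (q := q) (n := n) (m := m))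
  rwa [map_mul, map_add, map_smul, map_add, AlgHom.commutes] at this

lemma rel_ba : Tb R p q n m * Ta R p q n m =
    p • (Ta R p q n m + Tb R p q n m) + algebraMap R _ q := by
  have := RingQuot.mkAlgHom_rel R (TorusHeckeRel.ba (R := R) (p := p) (q := q) (n := n) (m := m))
  rwa [map_mul, map_add, map_smul, map_add, AlgHom.commutes] at this

end THAux
namespace THAux

variable {R : Type*} [CommRing R] (p q : R) (n m : ℕ) [NeZero (n + m)]

/-- span of the family -/
noncomputable def SS : Submodule R (TorusHecke R p q n m) :=
  Submodule.span R (Set.range (fam p q n m))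

lemma one_mem_SS : (1 : TorusHecke R p q n m) ∈ SS p q n m := by
  have : (1 : TorusHecke R p q n m) = fam p q n m ⟨0, Nat.pos_of_ne_zero (NeZero.ne _)⟩ := by
    rw [fam]
    simp
  rw [this]
  exact Submodule.subset_span (Set.mem_range_self _)

lemma Tapow_mem_SS (hm : 0 < m) (k : ℕ) (hk : k ≤ n) :
    Ta R p q n m ^ k ∈ SS p q n m := by
  have : Ta R p q n m ^ k = fam p q n m ⟨k, by omega⟩ := by
    rw [fam, if_pos (by simpa using hk)]
  rw [this]
  exact Submodule.subset_span (Set.mem_range_self _)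

lemma Tbpow_mem_SS (hm : 0 < m) (k : ℕ) (hk : k ≤ m) :
    Tb R p q n m ^ k ∈ SS p q n m := by
  rcases Nat.eq_zero_or_pos k with rfl | hk1
  · simpa using one_mem_SS p q n m
  rcases Nat.eq_or_lt_of_le hk with heq | hkm
  · rw [heq, ← rel_pow]
    exact Tapow_mem_SS p q n m hm n le_rfl
  · have h4 : n + m - (n + m - k) = k := by omega
    have : Tb R p q n m ^ k = fam p q n m ⟨n + m - k, by omega⟩ := by
      rw [fam]
      rw [if_neg (show ¬((⟨n + m - k, by omega⟩ : Fin (n + m)) : ℕ) ≤ n by simp; omega)]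
      show _ = Tb R p q n m ^ (n + m - (n + m - k))
      rw [h4]
    rw [this]
    exact Submodule.subset_span (Set.mem_range_self _)

lemma TaTb_mem_SS (hn : 0 < n) (hm : 0 < m) (k : ℕ) (hk : k ≤ m) :
    Ta R p q n m * Tb R p q n m ^ k ∈ SS p q n m := by
  induction k with
  | zero => simpa using Tapow_mem_SS p q n m hm 1 hn
  | succ k ih =>
    have key : Ta R p q n m * Tb R p q n m ^ (k + 1) =
        p • (Ta R p q n m * Tb R p q n m ^ k) + p • Tb R p q n m ^ (k + 1)
          + q • Tb R p q n m ^ k := by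
      rw [pow_succ', ← mul_assoc, rel_ab, add_mul, smul_mul_assoc, add_mul, smul_add,
        ← pow_succ', ← Algebra.smul_def]
    rw [key]
    exact Submodule.add_mem _ (Submodule.add_mem _
      (Submodule.smul_mem _ _ (ih (by omega)))
      (Submodule.smul_mem _ _ (Tbpow_mem_SS p q n m hm _ hk)))
      (Submodule.smul_mem _ _ (Tbpow_mem_SS p q n m hm _ (by omega)))

lemma TbTa_mem_SS (hn : 0 < n) (hm : 0 < m) (k : ℕ) (hk : k ≤ n) :
    Tb R p q n m * Ta R p q n m ^ k ∈ SS p q n m := by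
  induction k with
  | zero => simpa using Tbpow_mem_SS p q n m hm 1 hm
  | succ k ih =>
    have key : Tb R p q n m * Ta R p q n m ^ (k + 1) =
        p • (Tb R p q n m * Ta R p q n m ^ k) + p • Ta R p q n m ^ (k + 1)
          + q • Ta R p q n m ^ k := by
      rw [pow_succ', ← mul_assoc, rel_ba, add_mul, smul_mul_assoc, add_mul, smul_add,
        ← pow_succ', ← Algebra.smul_def]
      abel
    rw [key]
    exact Submodule.add_mem _ (Submodule.add_mem _
      (Submodule.smul_mem _ _ (ih (by omega)))
      (Submodule.smul_mem _ _ (Tapow_mem_SS p q n m hm _ hk)))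
      (Submodule.smul_mem _ _ (Tapow_mem_SS p q n m hm _ (by omega)))

end THAux
namespace THAux

set_option linter.unusedSectionVars false

variable {R : Type*} [CommRing R] (p q : R) (n m : ℕ) [NeZero (n + m)]

lemma Ta_mul_fam (hn : 2 ≤ n) (hm : 2 ≤ m) (i : Fin (n + m)) :
    Ta R p q n m * fam p q n m i ∈ SS p q n m := by
  rw [fam]
  by_cases h : (i : ℕ) ≤ n
  · rw [if_pos h, ← pow_succ']
    rcases Nat.eq_or_lt_of_le h with heq | hlt
    · rw [heq, pow_succ', rel_pow]
      exact TaTb_mem_SS p q n m (by omega) (by omega) m le_rfl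
    · exact Tapow_mem_SS p q n m (by omega) _ hlt
  · rw [if_neg h]
    exact TaTb_mem_SS p q n m (by omega) (by omega) _ (by omega)

lemma Tb_mul_fam (hn : 2 ≤ n) (hm : 2 ≤ m) (i : Fin (n + m)) :
    Tb R p q n m * fam p q n m i ∈ SS p q n m := by
  rw [fam]
  by_cases h : (i : ℕ) ≤ n
  · rw [if_pos h]
    exact TbTa_mem_SS p q n m (by omega) (by omega) _ h
  · rw [if_neg h, ← pow_succ']
    have := i.isLt
    exact Tbpow_mem_SS p q n m (by omega) _ (by omega)

lemma Ta_mul_SS (hn : 2 ≤ n) (hm : 2 ≤ m) (s : TorusHecke R p q n m) (hs : s ∈ SS p q n m) :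
    Ta R p q n m * s ∈ SS p q n m := by
  induction hs using Submodule.span_induction with
  | mem x hx =>
    obtain ⟨i, rfl⟩ := hx
    exact Ta_mul_fam p q n m hn hm i
  | zero => rw [mul_zero]; exact Submodule.zero_mem _
  | add x y _ _ hx hy => rw [mul_add]; exact Submodule.add_mem _ hx hy
  | smul c x _ hx => rw [mul_smul_comm]; exact Submodule.smul_mem _ _ hx

lemma Tb_mul_SS (hn : 2 ≤ n) (hm : 2 ≤ m) (s : TorusHecke R p q n m) (hs : s ∈ SS p q n m) :
    Tb R p q n m * s ∈ SS p q n m := by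
  induction hs using Submodule.span_induction with
  | mem x hx =>
    obtain ⟨i, rfl⟩ := hx
    exact Tb_mul_fam p q n m hn hm i
  | zero => rw [mul_zero]; exact Submodule.zero_mem _
  | add x y _ _ hx hy => rw [mul_add]; exact Submodule.add_mem _ hx hy
  | smul c x _ hx => rw [mul_smul_comm]; exact Submodule.smul_mem _ _ hx

/-- the quotient map, with codomain `TorusHecke`. -/
noncomputable def mkT : FreeAlgebra R (Fin 2) →ₐ[R] TorusHecke R p q n m :=
  RingQuot.mkAlgHom R (TorusHeckeRel R p q n m)

lemma mkT_surjective : Function.Surjective (mkT p q n m) :=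
  RingQuot.mkAlgHom_surjective R (TorusHeckeRel R p q n m)

lemma all_mem_SS (hn : 2 ≤ n) (hm : 2 ≤ m) (z : TorusHecke R p q n m) : z ∈ SS p q n m := by
  obtain ⟨y, rfl⟩ := mkT_surjective p q n m z
  have key : ∀ w : FreeAlgebra R (Fin 2), ∀ s ∈ SS p q n m,
      mkT p q n m w * s ∈ SS p q n m := by
    intro w
    refine FreeAlgebra.induction R (Fin 2)
      (motive := fun w => ∀ s ∈ SS p q n m, mkT p q n m w * s ∈ SS p q n m) ?_ ?_ ?_ ?_ w
    · intro r s hs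
      rw [AlgHom.commutes, ← Algebra.smul_def]
      exact Submodule.smul_mem _ _ hs
    · intro x s hs
      fin_cases x
      · exact Ta_mul_SS p q n m hn hm s hs
      · exact Tb_mul_SS p q n m hn hm s hs
    · intro a b ha hb s hs
      rw [map_mul, mul_assoc]
      exact ha _ (hb s hs)
    · intro a b ha hb s hs
      rw [map_add, add_mul]
      exact Submodule.add_mem _ (ha s hs) (hb s hs)
  simpa using key y 1 (one_mem_SS p q n m)

lemma span_top (hn : 2 ≤ n) (hm : 2 ≤ m) :
    ⊤ ≤ Submodule.span R (Set.range (fam p q n m)) :=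
  fun z _ => all_mem_SS p q n m hn hm z

end THAux

/-- `H_{n,m}(p,q)` is a free `R`-module of rank `n+m`, with basis
`{1, T_a, T_a², …, T_aⁿ (= T_bᵐ), T_b^{m−1}, …, T_b}`. -/
theorem stmt_13 (R : Type*) [CommRing R] (p q : R) (n m : ℕ) (hn : 2 ≤ n) (hm : 2 ≤ m) :
    ∃ b : Module.Basis (Fin (n + m)) R (TorusHecke R p q n m),
      ∀ i : Fin (n + m),
        b i = if (i : ℕ) ≤ n then Ta R p q n m ^ (i : ℕ)
              else Tb R p q n m ^ (n + m - (i : ℕ)) := by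
  haveI : NeZero (n + m) := ⟨by omega⟩
  refine ⟨Module.Basis.mk (THAux.fam_indep p q n m hn hm) (THAux.span_top p q n m hn hm), fun i => ?_⟩
  rw [Module.Basis.mk_apply]
  rfl
end
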